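/- The relation ≼ is a linear order on FreeMagma E, it is a well-order (every nonempty subset has a least element), and it is monomial: if σ ≺ σ' then τ·σ ≺ τ·σ' and σ·τ ≺ σ'·τ for every τ ∈ FreeMagma E. -/

import Mathlib

/-- The additive extension of the degree function `d : E → ℕ` to the free magma. -/
def FreeMagma.mdeg {E : Type*} (d : E → ℕ) : FreeMagma E → ℕ
  | .of a => d a
  | .mul x y => FreeMagma.mdeg d x + FreeMagma.mdeg d y

/-- The number of branches: `b a = 0` on generators and `b (x·y) = b y + 1`. -/
def FreeMagma.nbranch {E : Type*} : FreeMagma E → ℕ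
  | .of _ => 0
  | .mul _ y => FreeMagma.nbranch y + 1

/-- The list of branches: `ℓ a = []` and `ℓ (x·y) = x :: ℓ y`. -/
def FreeMagma.branchList {E : Type*} : FreeMagma E → List (FreeMagma E)
  | .of _ => []
  | .mul x y => x :: FreeMagma.branchList y

/-- The root: `r a = a` and `r (x·y) = r y`. -/
def FreeMagma.rootOf {E : Type*} : FreeMagma E → E
  | .of a => a
  | .mul _ y => FreeMagma.rootOf y

/-- The strict order `≺` on the free magma (planar `E`-decorated rooted trees):
compare by degree, then by number of branches, then lexicographically on the list of
branches, then by the root decoration. -/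
inductive MagmaLt {E : Type*} [LT E] (d : E → ℕ) : FreeMagma E → FreeMagma E → Prop
  | deg {σ τ : FreeMagma E} : FreeMagma.mdeg d σ < FreeMagma.mdeg d τ → MagmaLt d σ τ
  | branches {σ τ : FreeMagma E} : FreeMagma.mdeg d σ = FreeMagma.mdeg d τ →
      FreeMagma.nbranch σ < FreeMagma.nbranch τ → MagmaLt d σ τ
  | lex {σ τ : FreeMagma E} : FreeMagma.mdeg d σ = FreeMagma.mdeg d τ →
      FreeMagma.nbranch σ = FreeMagma.nbranch τ →
      List.Lex (MagmaLt d) (FreeMagma.branchList σ) (FreeMagma.branchList τ) → MagmaLt d σ τ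
  | root {σ τ : FreeMagma E} : FreeMagma.mdeg d σ = FreeMagma.mdeg d τ →
      FreeMagma.nbranch σ = FreeMagma.nbranch τ →
      FreeMagma.branchList σ = FreeMagma.branchList τ →
      FreeMagma.rootOf σ < FreeMagma.rootOf τ → MagmaLt d σ τ

namespace MagmaLtAux

variable {E : Type*}

lemma one_le_mdeg (d : E → ℕ) (hd : ∀ a : E, 1 ≤ d a) :
    ∀ σ : FreeMagma E, 1 ≤ FreeMagma.mdeg d σ
  | .of a => hd a
  | .mul x y => le_trans (one_le_mdeg d hd x) (Nat.le_add_right _ _)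

lemma sizeOf_lt_of_mem_branchList :
    ∀ {σ : FreeMagma E} {x : FreeMagma E}, x ∈ FreeMagma.branchList σ → sizeOf x < sizeOf σ
  | .of _, x, hx => by simp [FreeMagma.branchList] at hx
  | .mul y z, x, hx => by
      simp only [FreeMagma.branchList, List.mem_cons] at hx
      rcases hx with rfl | hx
      · show sizeOf _ < 1 + sizeOf (_ : FreeMagma E) + sizeOf z; omega
      · have := sizeOf_lt_of_mem_branchList hx
        show sizeOf _ < 1 + sizeOf (_ : FreeMagma E) + sizeOf z; omega

lemma eq_of_branchList_rootOf :
    ∀ {σ τ : FreeMagma E}, FreeMagma.branchList σ = FreeMagma.branchList τ →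
      FreeMagma.rootOf σ = FreeMagma.rootOf τ → σ = τ
  | .of a, .of b, _, hr => by simp only [FreeMagma.rootOf] at hr; rw [hr]
  | .of a, .mul x y, hl, _ => by simp [FreeMagma.branchList] at hl
  | .mul x y, .of a, hl, _ => by simp [FreeMagma.branchList] at hl
  | .mul x y, .mul x' y', hl, hr => by
      simp only [FreeMagma.branchList, List.cons.injEq] at hl
      simp only [FreeMagma.rootOf] at hr
      obtain ⟨rfl, hl⟩ := hl
      rw [eq_of_branchList_rootOf hl hr]

lemma lex_trich {α : Type*} {r : α → α → Prop} :
    ∀ (l₁ l₂ : List α), (∀ x ∈ l₁, ∀ y ∈ l₂, r x y ∨ x = y ∨ r y x) →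
      List.Lex r l₁ l₂ ∨ l₁ = l₂ ∨ List.Lex r l₂ l₁
  | [], [], _ => Or.inr (Or.inl rfl)
  | [], _ :: _, _ => Or.inl List.Lex.nil
  | _ :: _, [], _ => Or.inr (Or.inr List.Lex.nil)
  | a :: l₁, b :: l₂, h => by
    rcases h a List.mem_cons_self b List.mem_cons_self with hab | rfl | hba
    · exact Or.inl (List.Lex.rel hab)
    · rcases lex_trich l₁ l₂
        (fun x hx y hy => h x (List.mem_cons_of_mem _ hx) y (List.mem_cons_of_mem _ hy)) with
        h1 | rfl | h2
      · exact Or.inl (List.Lex.cons h1)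
      · exact Or.inr (Or.inl rfl)
      · exact Or.inr (Or.inr (List.Lex.cons h2))
    · exact Or.inr (Or.inr (List.Lex.rel hba))

lemma lex_trans {α : Type*} {r : α → α → Prop} :
    ∀ {l₁ l₂ l₃ : List α}, (∀ x ∈ l₁, ∀ y ∈ l₂, ∀ z ∈ l₃, r x y → r y z → r x z) →
      List.Lex r l₁ l₂ → List.Lex r l₂ l₃ → List.Lex r l₁ l₃ := by
  intro l₁ l₂ l₃ h h12 h23
  induction h12 generalizing l₃ with
  | nil => cases h23 with
    | rel _ => exact List.Lex.nil
    | cons _ => exact List.Lex.nil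
  | @rel a l₁' b l₂' hab => cases h23 with
    | @rel _ _ c l₃' hbc =>
        exact List.Lex.rel (h a List.mem_cons_self b List.mem_cons_self
          c List.mem_cons_self hab hbc)
    | cons _ => exact List.Lex.rel hab
  | @cons a l₁' l₂' h12' ih => cases h23 with
    | @rel _ _ c l₃' hac => exact List.Lex.rel hac
    | @cons _ _ l₃' h23' =>
        exact List.Lex.cons (ih (fun x hx y hy z hz => h x (List.mem_cons_of_mem _ hx)
          y (List.mem_cons_of_mem _ hy) z (List.mem_cons_of_mem _ hz)) h23')

lemma lex_irrefl {α : Type*} {r : α → α → Prop} :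
    ∀ {l : List α}, (∀ x ∈ l, ¬ r x x) → ¬ List.Lex r l l
  | [], _, h => by cases h
  | a :: l, h, hl => by
      cases hl with
      | rel hr => exact h a List.mem_cons_self hr
      | cons hl' => exact lex_irrefl (fun x hx => h x (List.mem_cons_of_mem _ hx)) hl'

variable [LinearOrder E] {d : E → ℕ}

theorem trich : ∀ (σ τ : FreeMagma E), MagmaLt d σ τ ∨ σ = τ ∨ MagmaLt d τ σ := fun σ τ => by
  rcases lt_trichotomy (FreeMagma.mdeg d σ) (FreeMagma.mdeg d τ) with h | h | h
  · exact Or.inl (.deg h)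
  · rcases lt_trichotomy (FreeMagma.nbranch σ) (FreeMagma.nbranch τ) with h2 | h2 | h2
    · exact Or.inl (.branches h h2)
    · rcases lex_trich (FreeMagma.branchList σ) (FreeMagma.branchList τ)
        (fun x hx y hy =>
          have h1 : sizeOf x < sizeOf σ := sizeOf_lt_of_mem_branchList hx
          have h2' : sizeOf y < sizeOf τ := sizeOf_lt_of_mem_branchList hy
          trich x y) with h3 | h3 | h3
      · exact Or.inl (.lex h h2 h3)
      · rcases lt_trichotomy (FreeMagma.rootOf σ) (FreeMagma.rootOf τ) with h4 | h4 | h4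
        · exact Or.inl (.root h h2 h3 h4)
        · exact Or.inr (Or.inl (eq_of_branchList_rootOf h3 h4))
        · exact Or.inr (Or.inr (.root h.symm h2.symm h3.symm h4))
      · exact Or.inr (Or.inr (.lex h.symm h2.symm h3))
    · exact Or.inr (Or.inr (.branches h.symm h2))
  · exact Or.inr (Or.inr (.deg h))
termination_by σ τ => sizeOf σ + sizeOf τ
decreasing_by omega

theorem mtrans : ∀ (σ τ ρ : FreeMagma E), MagmaLt d σ τ → MagmaLt d τ ρ → MagmaLt d σ ρ :=
  fun σ τ ρ h1 h2 => by
  cases h1 with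
  | deg ha => cases h2 with
    | deg hb => exact .deg (ha.trans hb)
    | branches hb _ => exact .deg (hb ▸ ha)
    | lex hb _ _ => exact .deg (hb ▸ ha)
    | root hb _ _ _ => exact .deg (hb ▸ ha)
  | branches ha ha2 => cases h2 with
    | deg hb => exact .deg (ha ▸ hb)
    | branches hb hb2 => exact .branches (ha.trans hb) (ha2.trans hb2)
    | lex hb hb2 _ => exact .branches (ha.trans hb) (hb2 ▸ ha2)
    | root hb hb2 _ _ => exact .branches (ha.trans hb) (hb2 ▸ ha2)
  | lex ha ha2 ha3 => cases h2 with
    | deg hb => exact .deg (ha ▸ hb)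
    | branches hb hb2 => exact .branches (ha.trans hb) (ha2 ▸ hb2)
    | lex hb hb2 hb3 =>
        refine .lex (ha.trans hb) (ha2.trans hb2)
          (lex_trans (fun x hx y hy z hz hxy hyz =>
            have h1 : sizeOf x < sizeOf σ := sizeOf_lt_of_mem_branchList hx
            have h2' : sizeOf y < sizeOf τ := sizeOf_lt_of_mem_branchList hy
            have h3 : sizeOf z < sizeOf ρ := sizeOf_lt_of_mem_branchList hz
            mtrans x y z hxy hyz) ha3 hb3)
    | root hb hb2 hb3 _ => exact .lex (ha.trans hb) (ha2.trans hb2) (hb3 ▸ ha3)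
  | root ha ha2 ha3 ha4 => cases h2 with
    | deg hb => exact .deg (ha ▸ hb)
    | branches hb hb2 => exact .branches (ha.trans hb) (ha2 ▸ hb2)
    | lex hb hb2 hb3 => exact .lex (ha.trans hb) (ha2.trans hb2) (ha3 ▸ hb3)
    | root hb hb2 hb3 hb4 =>
        exact .root (ha.trans hb) (ha2.trans hb2) (ha3.trans hb3) (ha4.trans hb4)
termination_by σ τ ρ => sizeOf σ + sizeOf τ + sizeOf ρ
decreasing_by omega

theorem mirrefl : ∀ (σ : FreeMagma E), ¬ MagmaLt d σ σ := fun σ h => by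
  cases h with
  | deg h => exact lt_irrefl _ h
  | branches _ h => exact lt_irrefl _ h
  | lex _ _ h =>
      exact lex_irrefl (fun x hx =>
        have h1 : sizeOf x < sizeOf σ := sizeOf_lt_of_mem_branchList hx
        mirrefl x) h
  | root _ _ _ h => exact lt_irrefl _ h
termination_by σ => sizeOf σ
decreasing_by omega

lemma finite_mdeg_le (hd : ∀ a : E, 1 ≤ d a) (hfib : ∀ n : ℕ, {a : E | d a = n}.Finite) :
    ∀ n : ℕ, {σ : FreeMagma E | FreeMagma.mdeg d σ ≤ n}.Finite := by
  intro n
  induction n with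
  | zero =>
      convert Set.finite_empty
      ext σ
      simp only [Set.mem_setOf_eq, Set.mem_empty_iff_false, iff_false]
      have := one_le_mdeg d hd σ
      omega
  | succ n ih =>
      have hE : {a : E | d a ≤ n + 1}.Finite := by
        have : {a : E | d a ≤ n + 1} ⊆ ⋃ k ∈ Set.Iic (n + 1), {a : E | d a = k} := by
          intro a ha
          exact Set.mem_biUnion ha rfl
        exact Set.Finite.subset (Set.Finite.biUnion (Set.finite_Iic _) fun k _ => hfib k) this
      have hsub : {σ : FreeMagma E | FreeMagma.mdeg d σ ≤ n + 1} ⊆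
          (FreeMagma.of '' {a : E | d a ≤ n + 1}) ∪
          Set.image2 (· * ·) {σ : FreeMagma E | FreeMagma.mdeg d σ ≤ n}
            {σ : FreeMagma E | FreeMagma.mdeg d σ ≤ n} := by
        rintro (⟨a⟩ | ⟨x, y⟩) hσ
        · exact Or.inl ⟨a, hσ, rfl⟩
        · have hx1 := one_le_mdeg d hd x
          have hy1 := one_le_mdeg d hd y
          have hσ' : FreeMagma.mdeg d x + FreeMagma.mdeg d y ≤ n + 1 := hσ
          exact Or.inr ⟨x, by simp only [Set.mem_setOf_eq]; omega,
            y, by simp only [Set.mem_setOf_eq]; omega, rfl⟩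
      exact Set.Finite.subset ((hE.image _).union (Set.Finite.image2 _ ih ih)) hsub

lemma exists_least_finset :
    ∀ t : Finset (FreeMagma E), t.Nonempty →
      ∃ m ∈ t, ∀ x ∈ t, MagmaLt d m x ∨ m = x := by
  intro t
  induction t using Finset.induction with
  | empty => rintro ⟨x, hx⟩; simp at hx
  | @insert a t ha ih =>
      intro _
      rcases t.eq_empty_or_nonempty with rfl | hne
      · exact ⟨a, Finset.mem_insert_self _ _, by
          intro x hx
          simp only [Finset.mem_insert, Finset.notMem_empty, or_false] at hx
          exact Or.inr hx.symm⟩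
      · obtain ⟨m, hm, hleast⟩ := ih hne
        rcases trich a m with hab | rfl | hba
        · refine ⟨a, Finset.mem_insert_self _ _, ?_⟩
          intro x hx
          rcases Finset.mem_insert.mp hx with rfl | hx
          · exact Or.inr rfl
          · rcases hleast x hx with h | rfl
            · exact Or.inl (mtrans _ _ _ hab h)
            · exact Or.inl hab
        · exact ⟨a, Finset.mem_insert_self _ _, fun x hx => by
            rcases Finset.mem_insert.mp hx with rfl | hx
            · exact Or.inr rfl
            · exact hleast x hx⟩
        · refine ⟨m, Finset.mem_insert_of_mem hm, ?_⟩
          intro x hx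
          rcases Finset.mem_insert.mp hx with rfl | hx
          · exact Or.inl hba
          · exact hleast x hx

end MagmaLtAux

/-- The order `≼` on the free magma of planar decorated rooted trees is a linear order,
a well-order, and a monomial order. -/
theorem magmaLt_isStrictTotalOrder_wellOrder_monomial (E : Type*) [LinearOrder E]
    (hwo : WellFoundedLT E) (d : E → ℕ) (hd : ∀ a : E, 1 ≤ d a)
    (hfib : ∀ n : ℕ, {a : E | d a = n}.Finite)
    (href : ∀ a b : E, d a < d b → a < b) :
    IsStrictTotalOrder (FreeMagma E) (MagmaLt d) ∧
    (∀ S : Set (FreeMagma E), S.Nonempty →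
      ∃ m ∈ S, ∀ x ∈ S, MagmaLt d m x ∨ m = x) ∧
    (∀ σ σ' τ : FreeMagma E, MagmaLt d σ σ' →
      MagmaLt d (τ * σ) (τ * σ') ∧ MagmaLt d (σ * τ) (σ' * τ)) := by
  refine ⟨?_, ?_, ?_⟩
  · exact { trichotomous := fun a b h1 h2 => ((MagmaLtAux.trich a b).resolve_left h1).resolve_right h2, irrefl := MagmaLtAux.mirrefl,
            trans := MagmaLtAux.mtrans }
  · -- well-order
    intro S hS
    obtain ⟨n, hn, hnmin⟩ := wellFounded_lt.has_min (FreeMagma.mdeg d '' S)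
      (hS.image _)
    obtain ⟨σ0, hσ0S, hσ0⟩ := hn
    set T : Set (FreeMagma E) := {σ ∈ S | FreeMagma.mdeg d σ = n} with hT
    have hTfin : T.Finite :=
      (MagmaLtAux.finite_mdeg_le hd hfib n).subset (fun σ hσ => le_of_eq hσ.2)
    have hTne : T.Nonempty := ⟨σ0, hσ0S, hσ0⟩
    obtain ⟨m, hm, hleast⟩ := MagmaLtAux.exists_least_finset hTfin.toFinset
      (by simpa using hTne)
    rw [Set.Finite.mem_toFinset] at hm
    refine ⟨m, hm.1, ?_⟩
    intro x hx
    rcases eq_or_lt_of_le (le_of_not_gt (hnmin _ ⟨x, hx, rfl⟩)) with heq | hlt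
    · exact hleast x (hTfin.mem_toFinset.mpr ⟨hx, heq.symm⟩)
    · exact Or.inl (.deg (hm.2 ▸ hlt))
  · -- monomial
    intro σ σ' τ h
    have hmul_deg : ∀ x y : FreeMagma E,
        FreeMagma.mdeg d (x * y) = FreeMagma.mdeg d x + FreeMagma.mdeg d y := fun _ _ => rfl
    have hmul_nb : ∀ x y : FreeMagma E,
        FreeMagma.nbranch (x * y) = FreeMagma.nbranch y + 1 := fun _ _ => rfl
    have hmul_bl : ∀ x y : FreeMagma E,
        FreeMagma.branchList (x * y) = x :: FreeMagma.branchList y := fun _ _ => rfl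
    have hmul_rt : ∀ x y : FreeMagma E,
        FreeMagma.rootOf (x * y) = FreeMagma.rootOf y := fun _ _ => rfl
    constructor
    · cases h with
      | deg h' => exact .deg (by rw [hmul_deg, hmul_deg]; omega)
      | branches h' h2 =>
          exact .branches (by rw [hmul_deg, hmul_deg]; omega)
            (by rw [hmul_nb, hmul_nb]; omega)
      | lex h' h2 h3 =>
          exact .lex (by rw [hmul_deg, hmul_deg]; omega)
            (by rw [hmul_nb, hmul_nb]; omega)
            (by rw [hmul_bl, hmul_bl]; exact List.Lex.cons h3)
      | root h' h2 h3 h4 =>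
          exact .root (by rw [hmul_deg, hmul_deg]; omega)
            (by rw [hmul_nb, hmul_nb]; omega)
            (by rw [hmul_bl, hmul_bl, h3])
            (by rw [hmul_rt, hmul_rt]; exact h4)
    · have hdle : FreeMagma.mdeg d σ ≤ FreeMagma.mdeg d σ' := by
        cases h with
        | deg h' => exact h'.le
        | branches h' _ => exact h'.le
        | lex h' _ _ => exact h'.le
        | root h' _ _ _ => exact h'.le
      rcases lt_or_eq_of_le hdle with hlt | heq
      · exact .deg (by rw [hmul_deg, hmul_deg]; omega)
      · exact .lex (by rw [hmul_deg, hmul_deg]; omega) (by rw [hmul_nb, hmul_nb])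
          (by rw [hmul_bl, hmul_bl]; exact List.Lex.rel h)
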